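/- Any (d+1)-uniform intersecting family F ⊆ binom([n], d+1) satisfies |F| ≤ |∂_d F| (Katona's shadow theorem). -/

import Mathlib

open Finset UV
open scoped FinsetFamily

namespace KatonaAux

variable {n : ℕ}

lemma compress_singleton {i j : Fin n} {A : Finset (Fin n)} (hi : i ∉ A) (hj : j ∈ A) :
    compress {i} {j} A = insert i (A.erase j) := by
  rw [compress, if_pos ⟨by simpa using hi, by simpa using hj⟩]
  have hij : i ≠ j := fun h => hi (h ▸ hj)
  ext x
  simp only [sup_eq_union, sdiff_singleton_eq_erase, mem_erase, mem_union, mem_insert,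
    mem_singleton]
  constructor
  · rintro ⟨hx, hA | rfl⟩
    · exact Or.inr ⟨hx, hA⟩
    · exact Or.inl rfl
  · rintro (rfl | ⟨hx, hA⟩)
    · exact ⟨hij, Or.inr rfl⟩
    · exact ⟨hx, Or.inl hA⟩

lemma compress_singleton_ne {i j : Fin n} {A : Finset (Fin n)}
    (h : compress {i} {j} A ≠ A) : i ∉ A ∧ j ∈ A := by
  by_contra hc
  refine h ?_
  rw [compress, if_neg]
  intro ⟨h1, h2⟩
  exact hc ⟨by simpa using h1, by simpa using h2⟩

lemma mem_of_isCompressed {i j : Fin n} {ℬ : Finset (Finset (Fin n))}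
    (h : IsCompressed {i} {j} ℬ) {A : Finset (Fin n)} (hA : A ∈ ℬ) (hi : i ∉ A) (hj : j ∈ A) :
    insert i (A.erase j) ∈ ℬ := by
  have := compress_mem_compression (u := {i}) (v := {j}) hA
  rwa [h.eq, compress_singleton hi hj] at this

lemma isCompressed_of_forall {ℬ : Finset (Finset (Fin n))} {i j : Fin n}
    (h : ∀ A ∈ ℬ, compress {i} {j} A ∈ ℬ) : IsCompressed {i} {j} ℬ := by
  unfold IsCompressed
  ext A
  rw [mem_compression]
  constructor
  · rintro (⟨hA, -⟩ | ⟨hA, B, hB, rfl⟩)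
    · exact hA
    · exact absurd (h B hB) hA
  · intro hA
    exact Or.inl ⟨hA, h A hA⟩

def Intersecting' (ℬ : Finset (Finset (Fin n))) : Prop :=
  ∀ F ∈ ℬ, ∀ G ∈ ℬ, (F ∩ G).Nonempty

lemma aux_inter {ℬ : Finset (Finset (Fin n))} {i j : Fin n} (h : Intersecting' ℬ)
    {B y : Finset (Fin n)} (hB : B ∈ ℬ) (hBi : i ∉ B) (hBj : j ∈ B) (hy : y ∈ ℬ)
    (hcy : compress {i} {j} y ∈ ℬ) :
    ((insert i (B.erase j)) ∩ y).Nonempty := by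
  by_cases hc : ∃ e ∈ B ∩ y, e ≠ j
  · obtain ⟨e, he, hej⟩ := hc
    rw [mem_inter] at he
    exact ⟨e, mem_inter.2 ⟨mem_insert_of_mem (mem_erase.2 ⟨hej, he.1⟩), he.2⟩⟩
  push_neg at hc
  obtain ⟨e, he⟩ := h B hB y hy
  rw [mem_inter] at he
  have hej : e = j := hc e (mem_inter.2 he)
  subst hej
  by_cases hiy : i ∈ y
  · exact ⟨i, mem_inter.2 ⟨mem_insert_self _ _, hiy⟩⟩
  · have hy' : insert i (y.erase e) ∈ ℬ := by
      rwa [compress_singleton hiy he.2] at hcy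
    obtain ⟨f, hf⟩ := h B hB _ hy'
    rw [mem_inter, mem_insert] at hf
    obtain ⟨hfB, rfl | hf2⟩ := hf
    · exact absurd hfB hBi
    · rw [mem_erase] at hf2
      exact absurd (hc f (mem_inter.2 ⟨hfB, hf2.2⟩)) (by simpa using hf2.1)

lemma intersecting_compression {ℬ : Finset (Finset (Fin n))} (i j : Fin n)
    (h : Intersecting' ℬ) : Intersecting' (𝓒 {i} {j} ℬ) := by
  have key : ∀ x ∈ 𝓒 {i} {j} ℬ, (x ∈ ℬ ∧ compress {i} {j} x ∈ ℬ) ∨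
      ∃ B ∈ ℬ, i ∉ B ∧ j ∈ B ∧ x = insert i (B.erase j) := by
    intro x hx
    rw [mem_compression] at hx
    obtain ⟨h1, h2⟩ | ⟨h1, B, hB, rfl⟩ := hx
    · exact Or.inl ⟨h1, h2⟩
    · have hne : compress {i} {j} B ≠ B := fun hc => h1 (by rw [hc]; exact hB)
      obtain ⟨hBi, hBj⟩ := compress_singleton_ne hne
      exact Or.inr ⟨B, hB, hBi, hBj, compress_singleton hBi hBj⟩
  intro x hx y hy
  obtain hx' | ⟨B, hB, hBi, hBj, rfl⟩ := key x hx
  · obtain hy' | ⟨C, hC, hCi, hCj, rfl⟩ := key y hy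
    · exact h x hx'.1 y hy'.1
    · rw [inter_comm]
      exact aux_inter h hC hCi hCj hx'.1 hx'.2
  · obtain hy' | ⟨C, hC, hCi, hCj, rfl⟩ := key y hy
    · exact aux_inter h hB hBi hBj hy'.1 hy'.2
    · exact ⟨i, mem_inter.2 ⟨mem_insert_self _ _, mem_insert_self _ _⟩⟩


def fmeasure (ℬ : Finset (Finset (Fin n))) : ℕ := ∑ A ∈ ℬ, ∑ a ∈ A, (a : ℕ)

lemma sum_compress_lt {i j : Fin n} (hij : i < j) {A : Finset (Fin n)}
    (h : compress {i} {j} A ≠ A) :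
    ∑ a ∈ compress {i} {j} A, (a : ℕ) < ∑ a ∈ A, (a : ℕ) := by
  obtain ⟨hi, hj⟩ := compress_singleton_ne h
  rw [compress_singleton hi hj, sum_insert (fun hmem => hi (mem_of_mem_erase hmem))]
  have h2 : ∑ a ∈ A.erase j, (a : ℕ) + (j : ℕ) = ∑ a ∈ A, (a : ℕ) :=
    Finset.sum_erase_add _ _ hj
  omega

lemma fmeasure_compression_lt {i j : Fin n} (hij : i < j) {ℬ : Finset (Finset (Fin n))}
    (hne : 𝓒 {i} {j} ℬ ≠ ℬ) : fmeasure (𝓒 {i} {j} ℬ) < fmeasure ℬ := by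
  rw [compression] at hne ⊢
  have q : ∀ Q ∈ ℬ.filter (fun A => compress {i} {j} A ∉ ℬ), compress {i} {j} Q ≠ Q := by
    simp_rw [mem_filter]
    intro Q hQ h
    rw [h] at hQ
    exact hQ.2 hQ.1
  have uA : ℬ.filter (fun A => compress {i} {j} A ∈ ℬ) ∪
      ℬ.filter (fun A => compress {i} {j} A ∉ ℬ) = ℬ := filter_union_filter_not_eq _ _
  have ne₂ : (ℬ.filter (fun A => compress {i} {j} A ∉ ℬ)).Nonempty := by
    refine nonempty_iff_ne_empty.2 fun z => hne ?_
    rw [filter_image, z, image_empty, union_empty]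
    rwa [z, union_empty] at uA
  rw [fmeasure, fmeasure, sum_union compress_disjoint]
  conv_rhs => rw [← uA]
  rw [sum_union (disjoint_filter_filter_not _ _ _), add_lt_add_iff_left, filter_image,
    sum_image compress_injOn]
  exact sum_lt_sum_of_nonempty ne₂ fun A hA => sum_compress_lt hij (q _ hA)

lemma exists_compressed (𝒜 : Finset (Finset (Fin n))) {k : ℕ}
    (h₁ : (𝒜 : Set (Finset (Fin n))).Sized k) (h₂ : Intersecting' 𝒜) :
    ∃ ℬ : Finset (Finset (Fin n)), (∂ ℬ).card ≤ (∂ 𝒜).card ∧ 𝒜.card = ℬ.card ∧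
      (ℬ : Set (Finset (Fin n))).Sized k ∧ Intersecting' ℬ ∧
      ∀ i j : Fin n, i < j → IsCompressed {i} {j} ℬ := by
  classical
  by_cases h : ∀ i j : Fin n, i < j → IsCompressed {i} {j} 𝒜
  · exact ⟨𝒜, le_rfl, rfl, h₁, h₂, h⟩
  · push_neg at h
    obtain ⟨i, j, hij, hnc⟩ := h
    have hne : 𝓒 {i} {j} 𝒜 ≠ 𝒜 := hnc
    have hlt := fmeasure_compression_lt hij hne
    have hsh : (∂ (𝓒 {i} {j} 𝒜)).card ≤ (∂ 𝒜).card := by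
      refine card_shadow_compression_le _ _ fun x hx => ⟨j, mem_singleton_self _, ?_⟩
      rw [mem_singleton] at hx
      subst hx
      rw [erase_singleton, erase_singleton]
      exact isCompressed_self _ _
    obtain ⟨ℬ, b1, b2, b3, b4, b5⟩ := exists_compressed (𝓒 {i} {j} 𝒜)
      (h₁.uvCompression (by simp)) (intersecting_compression i j h₂)
    exact ⟨ℬ, b1.trans hsh, (card_compression _ _ _).symm.trans b2, b3, b4, b5⟩
termination_by fmeasure 𝒜
decreasing_by exact hlt


lemma rel_lym {S : Finset (Fin n)} {k : ℕ} (hk : 0 < k) {ℬ : Finset (Finset (Fin n))}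
    (hS : ∀ A ∈ ℬ, A ⊆ S) (hs : (ℬ : Set (Finset (Fin n))).Sized k) :
    ℬ.card * k ≤ (∂ ℬ).card * (S.card - k + 1) := by
  classical
  refine card_mul_le_card_mul (fun B T => T ⊆ B) ?_ ?_
  · intro B hB
    have himg : B.image B.erase ⊆ (∂ ℬ).bipartiteAbove (fun B T => T ⊆ B) B := by
      intro T hT
      rw [mem_image] at hT
      obtain ⟨x, hx, rfl⟩ := hT
      rw [mem_bipartiteAbove]
      exact ⟨erase_mem_shadow hB hx, erase_subset _ _⟩
    have hcard : (B.image B.erase).card = k := by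
      rw [card_image_of_injOn (erase_injOn B), hs hB]
    rw [← hcard]
    exact card_le_card himg
  · intro T hT
    obtain ⟨B₀, hB₀, a, ha, rfl⟩ := mem_shadow_iff.1 hT
    have hTS : B₀.erase a ⊆ S := (erase_subset _ _).trans (hS _ hB₀)
    have hTcard : (B₀.erase a).card = k - 1 := by rw [card_erase_of_mem ha, hs hB₀]
    have hkS : k ≤ S.card := (hs hB₀ ▸ card_le_card (hS _ hB₀))
    have hsub : (ℬ.bipartiteBelow (fun B T => T ⊆ B) (B₀.erase a)) ⊆
        (S \ B₀.erase a).image (fun x => insert x (B₀.erase a)) := by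
      intro B hB
      rw [mem_bipartiteBelow] at hB
      obtain ⟨hBm, hTB⟩ := hB
      have h1 : ((B \ B₀.erase a)).card = 1 := by
        rw [card_sdiff_of_subset hTB, hs hBm, hTcard]
        omega
      obtain ⟨x, hx⟩ := card_eq_one.1 h1
      have hxB : x ∈ B \ B₀.erase a := hx ▸ mem_singleton_self x
      rw [mem_sdiff] at hxB
      rw [mem_image]
      refine ⟨x, mem_sdiff.2 ⟨hS _ hBm hxB.1, hxB.2⟩, ?_⟩
      apply Finset.eq_of_subset_of_card_le
      · intro y hy
        rw [mem_insert] at hy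
        obtain rfl | hy := hy
        · exact hxB.1
        · exact hTB hy
      · rw [hs hBm, card_insert_of_notMem hxB.2, hTcard]
        omega
    calc (ℬ.bipartiteBelow (fun B T => T ⊆ B) (B₀.erase a)).card
        ≤ ((S \ B₀.erase a).image (fun x => insert x (B₀.erase a))).card := card_le_card hsub
      _ ≤ (S \ B₀.erase a).card := card_image_le
      _ = S.card - k + 1 := by rw [card_sdiff_of_subset hTS, hTcard]; omega


lemma key_small {S : Finset (Fin n)} {k : ℕ} {ℬ : Finset (Finset (Fin n))}
    (hsub : ∀ A ∈ ℬ, A ⊆ S) (hsized : (ℬ : Set (Finset (Fin n))).Sized k)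
    (hi : Intersecting' ℬ) (hsmall : S.card < 2 * k ∨ k = 0) :
    ℬ.card ≤ (∂ ℬ).card := by
  obtain hsmall | rfl := hsmall
  · have hk : 0 < k := by omega
    have hlym := rel_lym hk hsub hsized
    have h1 : S.card - k + 1 ≤ k := by omega
    have h2 : ℬ.card * k ≤ (∂ ℬ).card * k :=
      hlym.trans (Nat.mul_le_mul_left _ h1)
    exact Nat.le_of_mul_le_mul_right h2 hk
  · have hempty : ℬ = ∅ := by
      rw [eq_empty_iff_forall_notMem]
      intro A hA
      have hA0 : A = ∅ := card_eq_zero.1 (hsized hA)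
      obtain ⟨e, he⟩ := hi A hA A hA
      rw [hA0] at he
      simp at he
    simp [hempty]

lemma key (s : ℕ) : ∀ (S : Finset (Fin n)) (k : ℕ) (ℬ : Finset (Finset (Fin n))),
    S.card ≤ s → (∀ A ∈ ℬ, A ⊆ S) → (ℬ : Set (Finset (Fin n))).Sized k → Intersecting' ℬ →
    (∀ i j : Fin n, i < j → IsCompressed {i} {j} ℬ) → ℬ.card ≤ (∂ ℬ).card := by
  classical
  induction s with
  | zero =>
    intro S k ℬ hcard hsub hsized hi hshift
    rcases Nat.eq_zero_or_pos k with rfl | hk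
    · exact key_small hsub hsized hi (Or.inr rfl)
    · exact key_small hsub hsized hi (Or.inl (by omega))
  | succ s ih =>
    intro S k ℬ hcard hsub hsized hi hshift
    rcases Nat.eq_zero_or_pos k with rfl | hk
    · exact key_small hsub hsized hi (Or.inr rfl)
    by_cases hS2 : S.card < 2 * k
    · exact key_small hsub hsized hi (Or.inl hS2)
    push_neg at hS2
    have hSne : S.Nonempty := card_pos.1 (by omega)
    set m := S.max' hSne with hm
    have hms : m ∈ S := S.max'_mem hSne
    have hltm : ∀ x ∈ S, x ≠ m → x < m := fun x hx hne => lt_of_le_of_ne (S.le_max' x hx) hne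
    set ℬ₁ := ℬ.filter (fun A => m ∈ A) with hℬ₁
    set ℬ₀ := ℬ.filter (fun A => ¬ m ∈ A) with hℬ₀
    set ℬ₁' := ℬ₁.image (fun A => A.erase m) with hℬ₁'
    have hScard : (S.erase m).card ≤ s := by
      rw [card_erase_of_mem hms]; omega
    -- facts about ℬ₀
    have f0sub : ∀ A ∈ ℬ₀, A ⊆ S.erase m := by
      intro A hA x hx
      rw [mem_filter] at hA
      exact mem_erase.2 ⟨fun h => hA.2 (h ▸ hx), hsub A hA.1 hx⟩
    have f0sized : (ℬ₀ : Set (Finset (Fin n))).Sized k := fun A hA =>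
      hsized (mem_filter.1 hA).1
    have f0int : Intersecting' ℬ₀ := fun A hA B hB =>
      hi A (mem_filter.1 hA).1 B (mem_filter.1 hB).1
    have f0shift : ∀ i j : Fin n, i < j → IsCompressed {i} {j} ℬ₀ := by
      intro i j hij
      refine isCompressed_of_forall fun A hA => ?_
      by_cases hcne : compress {i} {j} A = A
      · rwa [hcne]
      obtain ⟨hiA, hjA⟩ := compress_singleton_ne hcne
      rw [mem_filter] at hA
      have hjm : j < m := hltm j (hsub A hA.1 hjA) (fun h => hA.2 (h ▸ hjA))
      rw [compress_singleton hiA hjA, mem_filter]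
      refine ⟨mem_of_isCompressed (hshift i j hij) hA.1 hiA hjA, ?_⟩
      rw [mem_insert, mem_erase]
      rintro (rfl | ⟨-, hmA⟩)
      · exact absurd (hij.trans hjm) (lt_irrefl _)
      · exact hA.2 hmA
    -- facts about ℬ₁'
    have f1card : ℬ₁'.card = ℬ₁.card := by
      refine card_image_of_injOn fun A hA B hB h => ?_
      rw [mem_coe, mem_filter] at hA hB
      rw [← insert_erase hA.2, h, insert_erase hB.2]
    have f1sub : ∀ B ∈ ℬ₁', B ⊆ S.erase m := by
      intro B hB x hx
      obtain ⟨A, hA, rfl⟩ := mem_image.1 hB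
      rw [mem_filter] at hA
      rw [mem_erase] at hx
      exact mem_erase.2 ⟨hx.1, hsub A hA.1 hx.2⟩
    have f1sized : (ℬ₁' : Set (Finset (Fin n))).Sized (k - 1) := by
      intro B hB
      rw [mem_coe] at hB
      obtain ⟨A, hA, rfl⟩ := mem_image.1 hB
      rw [mem_filter] at hA
      rw [card_erase_of_mem hA.2, hsized hA.1]
    have f1int : Intersecting' ℬ₁' := by
      intro B1 hB1 B2 hB2
      obtain ⟨A, hA, rfl⟩ := mem_image.1 hB1
      obtain ⟨C, hC, rfl⟩ := mem_image.1 hB2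
      rw [mem_filter] at hA hC
      have hAC : A ∪ C ⊆ S := union_subset (hsub A hA.1) (hsub C hC.1)
      have hACcard : (A ∪ C).card < S.card := by
        have h1 := card_union_add_card_inter A C
        have h2 : 0 < (A ∩ C).card := card_pos.2 ⟨m, mem_inter.2 ⟨hA.2, hC.2⟩⟩
        have h3 := hsized hA.1
        have h4 := hsized hC.1
        omega
      have hx : (S \ (A ∪ C)).Nonempty := by
        rw [← card_pos, card_sdiff_of_subset hAC]
        omega
      obtain ⟨x, hx⟩ := hx
      rw [mem_sdiff, mem_union] at hx
      have hxm : x < m := hltm x hx.1 (fun h => hx.2 (Or.inl (h ▸ hA.2)))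
      have hA' : insert x (A.erase m) ∈ ℬ :=
        mem_of_isCompressed (hshift x m hxm) hA.1 (fun h => hx.2 (Or.inl h)) hA.2
      obtain ⟨e, he⟩ := hi _ hA' C hC.1
      rw [mem_inter, mem_insert] at he
      obtain ⟨rfl | heA, heC⟩ := he
      · exact absurd (Or.inr heC) hx.2
      · rw [mem_erase] at heA
        exact ⟨e, mem_inter.2 ⟨mem_erase.2 ⟨heA.1, heA.2⟩, mem_erase.2 ⟨heA.1, heC⟩⟩⟩
    have f1shift : ∀ i j : Fin n, i < j → IsCompressed {i} {j} ℬ₁' := by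
      intro i j hij
      refine isCompressed_of_forall fun B hB => ?_
      by_cases hcne : compress {i} {j} B = B
      · rwa [hcne]
      obtain ⟨hiB, hjB⟩ := compress_singleton_ne hcne
      obtain ⟨A, hA, rfl⟩ := mem_image.1 hB
      rw [mem_filter] at hA
      rw [mem_erase] at hjB
      have hjm : j < m := hltm j (hsub A hA.1 hjB.2) hjB.1
      have him : i ≠ m := fun h => absurd (h ▸ hij.trans hjm) (lt_irrefl _)
      have hiA : i ∉ A := fun h => hiB (mem_erase.2 ⟨him, h⟩)
      have hA' : insert i (A.erase j) ∈ ℬ :=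
        mem_of_isCompressed (hshift i j hij) hA.1 hiA hjB.2
      rw [compress_singleton hiB (mem_erase.2 hjB), mem_image]
      refine ⟨insert i (A.erase j), mem_filter.2 ⟨hA', mem_insert_of_mem
        (mem_erase.2 ⟨fun h => hjB.1 h.symm, hA.2⟩)⟩, ?_⟩
      ext y
      simp only [mem_insert, mem_erase]
      constructor
      · rintro ⟨hym, rfl | ⟨hyj, hyA⟩⟩
        · exact Or.inl rfl
        · exact Or.inr ⟨hyj, hym, hyA⟩
      · rintro (rfl | ⟨hyj, hym, hyA⟩)
        · exact ⟨him, Or.inl rfl⟩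
        · exact ⟨hym, Or.inr ⟨hyj, hyA⟩⟩
    -- inductive hypotheses
    have ih0 : ℬ₀.card ≤ (∂ ℬ₀).card := ih (S.erase m) k ℬ₀ hScard f0sub f0sized f0int f0shift
    have ih1 : ℬ₁'.card ≤ (∂ ℬ₁').card :=
      ih (S.erase m) (k - 1) ℬ₁' hScard f1sub f1sized f1int f1shift
    -- combine
    set Q := (∂ ℬ₁').image (insert m) with hQdef
    have hQsub : Q ⊆ ∂ ℬ := by
      intro T' hT'
      obtain ⟨T, hT, rfl⟩ := mem_image.1 hT'
      obtain ⟨B', hB', y, hy, rfl⟩ := mem_shadow_iff.1 hT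
      obtain ⟨A, hA, rfl⟩ := mem_image.1 hB'
      rw [mem_filter] at hA
      rw [mem_erase] at hy
      have heq : insert m ((A.erase m).erase y) = A.erase y := by
        rw [erase_right_comm, insert_erase (mem_erase.2 ⟨fun h => hy.1 h.symm, hA.2⟩)]
      rw [heq]
      exact erase_mem_shadow hA.1 hy.2
    have hPsub : ∂ ℬ₀ ⊆ ∂ ℬ := shadow_mono (filter_subset _ _)
    have hPm : ∀ T ∈ ∂ ℬ₀, m ∉ T := by
      intro T hT hmT
      obtain ⟨A, hA, y, hy, rfl⟩ := mem_shadow_iff.1 hT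
      exact (mem_filter.1 hA).2 (mem_of_mem_erase hmT)
    have hQm : ∀ T ∈ Q, m ∈ T := by
      intro T hT
      obtain ⟨T0, hT0, rfl⟩ := mem_image.1 hT
      exact mem_insert_self _ _
    have hdisj : Disjoint (∂ ℬ₀) Q := disjoint_left.2 fun {T} hT hT' => hPm T hT (hQm T hT')
    have hf1m : ∀ T ∈ ∂ ℬ₁', m ∉ T := by
      intro T hT hmT
      obtain ⟨B', hB', y, hy, rfl⟩ := mem_shadow_iff.1 hT
      exact absurd (f1sub B' hB' (mem_of_mem_erase hmT)) (fun h => (mem_erase.1 h).1 rfl)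
    have hQcard : Q.card = (∂ ℬ₁').card := by
      refine card_image_of_injOn fun T1 hT1 T2 hT2 h => ?_
      rw [mem_coe] at hT1 hT2
      rw [← erase_insert (hf1m T1 hT1), h, erase_insert (hf1m T2 hT2)]
    have hsplit : ℬ₁.card + ℬ₀.card = ℬ.card := card_filter_add_card_filter_not _
    calc ℬ.card = ℬ₁'.card + ℬ₀.card := by rw [f1card, hsplit]
      _ ≤ (∂ ℬ₁').card + (∂ ℬ₀).card := Nat.add_le_add ih1 ih0
      _ = Q.card + (∂ ℬ₀).card := by rw [hQcard]
      _ = (Q ∪ ∂ ℬ₀).card := (card_union_of_disjoint hdisj.symm).symm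
      _ ≤ (∂ ℬ).card := card_le_card (union_subset hQsub hPsub)

end KatonaAux

theorem stmt_7 (n d : ℕ) (𝒜 : Finset (Finset (Fin n)))
    (hunif : ∀ F ∈ 𝒜, F.card = d + 1)
    (hint : ∀ F ∈ 𝒜, ∀ G ∈ 𝒜, (F ∩ G).Nonempty) :
    𝒜.card ≤ (((Finset.univ : Finset (Fin n)).powersetCard d).filter
      (fun T => ∃ F ∈ 𝒜, T ⊆ F)).card := by
  classical
  have hsized : (𝒜 : Set (Finset (Fin n))).Sized (d + 1) := fun F hF => hunif F hF
  obtain ⟨ℬ, b1, b2, b3, b4, b5⟩ := KatonaAux.exists_compressed 𝒜 hsized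
    (fun F hF G hG => hint F hF G hG)
  have hkey : ℬ.card ≤ (∂ ℬ).card :=
    KatonaAux.key n Finset.univ (d + 1) ℬ (by simp) (fun A _ => Finset.subset_univ A) b3 b4 b5
  have heq : ((Finset.univ : Finset (Fin n)).powersetCard d).filter
      (fun T => ∃ F ∈ 𝒜, T ⊆ F) = ∂ 𝒜 := by
    ext T
    simp only [Finset.mem_filter, Finset.mem_powersetCard]
    constructor
    · rintro ⟨⟨-, hTcard⟩, F, hF, hTF⟩
      have hfe : (F \ T).Nonempty := by
        rw [← Finset.card_pos, Finset.card_sdiff_of_subset hTF, hunif F hF, hTcard]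
        omega
      obtain ⟨a, ha⟩ := hfe
      rw [Finset.mem_sdiff] at ha
      have hTe : T = F.erase a := by
        refine Finset.eq_of_subset_of_card_le
          (fun x hx => Finset.mem_erase.2 ⟨fun h => ha.2 (h ▸ hx), hTF hx⟩) ?_
        rw [Finset.card_erase_of_mem ha.1, hunif F hF, hTcard]
        omega
      rw [hTe]
      exact Finset.erase_mem_shadow hF ha.1
    · intro hT
      obtain ⟨F, hF, a, ha, rfl⟩ := Finset.mem_shadow_iff.1 hT
      refine ⟨⟨Finset.subset_univ _, ?_⟩, F, hF, Finset.erase_subset _ _⟩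
      rw [Finset.card_erase_of_mem ha, hunif F hF]
      omega
  rw [heq]
  calc 𝒜.card = ℬ.card := b2
    _ ≤ (∂ ℬ).card := hkey
    _ ≤ (∂ 𝒜).card := b1
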